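/- arXiv:1806.07643 — 4 statements merged into one kernel-verified Lean document; each statement's English description precedes it below -/
import Mathlib

section
/- Let P and Q be polytopes in ℝ^d. Suppose u and v are adjacent vertices of P + Q with Minkowski decompositions u = u_P + u_Q and v = v_P + v_Q, where u_P, v_P are vertices of P and u_Q, v_Q are vertices of Q. Then u_P and v_P are either adjacent vertices of P or they coincide, and likewise u_Q and v_Q are either adjacent vertices of Q or they coincide. -/
open Pointwise
open scoped RealInnerProductSpace

noncomputable section

abbrev Esp (d : ℕ) := EuclideanSpace ℝ (Fin d)

def IsPolytope {d : ℕ} (P : Set (Esp d)) : Prop :=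
  ∃ s : Finset (Esp d), s.Nonempty ∧ P = convexHull ℝ (s : Set (Esp d))

def polyFace {d : ℕ} (P : Set (Esp d)) (c : Esp d) : Set (Esp d) :=
  {x | x ∈ P ∧ ∀ y ∈ P, ⟪c, x⟫ ≤ ⟪c, y⟫}

def polyVerts {d : ℕ} (P : Set (Esp d)) : Set (Esp d) :=
  Set.extremePoints ℝ P

def f0 {d : ℕ} (P : Set (Esp d)) : ℕ := (polyVerts P).ncard

def polyAdj {d : ℕ} (P : Set (Esp d)) (u v : Esp d) : Prop :=
  u ≠ v ∧ u ∈ polyVerts P ∧ v ∈ polyVerts P ∧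
    ∃ c : Esp d, polyFace P c = segment ℝ u v

def polyGraph {d : ℕ} (P : Set (Esp d)) : SimpleGraph (Esp d) where
  Adj u v := polyAdj P u v
  symm := by
    constructor
    rintro u v ⟨hne, hu, hv, c, hc⟩
    exact ⟨hne.symm, hv, hu, c, by rw [hc, segment_symm]⟩
  loopless := by constructor; rintro u ⟨hne, -⟩; exact hne rfl

def polyDiam {d : ℕ} (P : Set (Esp d)) : ℕ :=
  sSup {n : ℕ | ∃ u ∈ polyVerts P, ∃ v ∈ polyVerts P, n = (polyGraph P).dist u v}

def polyDim {d : ℕ} (P : Set (Esp d)) : ℕ :=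
  Module.finrank ℝ (affineSpan ℝ P).direction

def IsFace {d : ℕ} (P F : Set (Esp d)) : Prop := ∃ c : Esp d, polyFace P c = F

def gammaVerts {d : ℕ} (P Q : Set (Esp d)) (u : Esp d) : Set (Esp d) :=
  {w ∈ polyVerts (P + Q) | ∃ v ∈ polyVerts Q, w = u + v}

lemma exists_min {d} {P : Set (Esp d)} (hP : IsPolytope P) (c : Esp d) :
    ∃ a ∈ P, ∀ x ∈ P, ⟪c, a⟫ ≤ ⟪c, x⟫ := by
  obtain ⟨s, hs, rfl⟩ := hP
  have hcomp : IsCompact (convexHull ℝ (s:Set (Esp d))) := s.finite_toSet.isCompact_convexHull ℝ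
  have hne : (convexHull ℝ (s:Set (Esp d))).Nonempty :=
    Set.Nonempty.convexHull (by exact_mod_cast hs)
  have hcont : ContinuousOn (fun x : Esp d => ⟪c, x⟫) (convexHull ℝ (s:Set (Esp d))) :=
    (Continuous.inner continuous_const continuous_id).continuousOn
  obtain ⟨a, ha, hmin⟩ := hcomp.exists_isMinOn hne hcont
  exact ⟨a, ha, fun x hx => by simpa using hmin hx⟩

/-- components of a point of a sum-face minimize on their factors -/
lemma comp_min {d} {P Q : Set (Esp d)} (hP : IsPolytope P) (hQ : IsPolytope Q)
    {c w wP wQ : Esp d}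
    (hw : w ∈ polyFace (P + Q) c) (hwP : wP ∈ P) (hwQ : wQ ∈ Q) (hweq : w = wP + wQ) :
    (∀ x ∈ P, ⟪c, wP⟫ ≤ ⟪c, x⟫) ∧ (∀ x ∈ Q, ⟪c, wQ⟫ ≤ ⟪c, x⟫) := by
  obtain ⟨a, haP, hamin⟩ := exists_min hP c
  obtain ⟨b, hbQ, hbmin⟩ := exists_min hQ c
  have h1 : ⟪c, w⟫ ≤ ⟪c, a + b⟫ := hw.2 (a + b) (Set.add_mem_add haP hbQ)
  rw [hweq, inner_add_right, inner_add_right] at h1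
  have h2 : ⟪c, a⟫ ≤ ⟪c, wP⟫ := hamin wP hwP
  have h3 : ⟪c, b⟫ ≤ ⟪c, wQ⟫ := hbmin wQ hwQ
  have e2 : ⟪c, wP⟫ = ⟪c, a⟫ := by linarith
  have e3 : ⟪c, wQ⟫ = ⟪c, b⟫ := by linarith
  exact ⟨fun x hx => e2 ▸ hamin x hx, fun x hx => e3 ▸ hbmin x hx⟩

lemma key {d : ℕ} (P Q : Set (Esp d)) (hP : IsPolytope P) (hQ : IsPolytope Q)
    (u v uP uQ vP vQ : Esp d)
    (huv : polyAdj (P + Q) u v)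
    (huP : uP ∈ polyVerts P) (huQ : uQ ∈ polyVerts Q) (hu : u = uP + uQ)
    (hvP : vP ∈ polyVerts P) (hvQ : vQ ∈ polyVerts Q) (hv : v = vP + vQ) :
    polyAdj P uP vP ∨ uP = vP := by
  by_cases hPQ : uP = vP
  · exact Or.inr hPQ
  left
  obtain ⟨hne, huV, hvV, c, hc⟩ := huv
  have huF : u ∈ polyFace (P + Q) c := by rw [hc]; exact left_mem_segment ℝ u v
  have hvF : v ∈ polyFace (P + Q) c := by rw [hc]; exact right_mem_segment ℝ u v
  obtain ⟨huPmin, huQmin⟩ := comp_min hP hQ huF huP.1 huQ.1 hu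
  obtain ⟨hvPmin, hvQmin⟩ := comp_min hP hQ hvF hvP.1 hvQ.1 hv
  -- the face of P in direction c
  have hPconv : Convex ℝ P := by obtain ⟨s, -, rfl⟩ := hP; exact convex_convexHull ℝ _
  refine ⟨hPQ, huP, hvP, c, ?_⟩
  apply Set.Subset.antisymm
  · -- polyFace P c ⊆ segment uP vP
    intro x hx
    -- x + uQ and x + vQ lie in the face of P+Q
    have hmem : ∀ q : Esp d, q ∈ Q → (∀ y ∈ Q, ⟪c, q⟫ ≤ ⟪c, y⟫) → x + q ∈ segment ℝ u v := by
      intro q hq hqmin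
      rw [← hc]
      refine ⟨Set.add_mem_add hx.1 hq, ?_⟩
      rintro y ⟨p, hp, q', hq', rfl⟩
      rw [inner_add_right, inner_add_right]
      exact add_le_add (hx.2 p hp) (hqmin q' hq')
    obtain ⟨s1, s2, hs1, hs2, hss, hseq⟩ := hmem uQ huQ.1 huQmin
    obtain ⟨t1, t2, ht1, ht2, htt, hteq⟩ := hmem vQ hvQ.1 hvQmin
    have hs1' : s1 = 1 - s2 := by linarith
    have ht1' : t1 = 1 - t2 := by linarith
    rw [hs1'] at hseq
    rw [ht1'] at hteq
    have hxu : x + uQ = u + s2 • (v - u) := by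
      linear_combination (norm := module) ((-1 : ℝ)) • hseq
    have hxv : x + vQ = u + t2 • (v - u) := by
      linear_combination (norm := module) ((-1 : ℝ)) • hteq
    have hx2 : x = uP + s2 • (v - u) := by
      linear_combination (norm := module) hxu + hu
    have hD : v - u = (vP - uP) + (vQ - uQ) := by
      linear_combination (norm := module) hv - hu
    have hsub : vQ - uQ = (t2 - s2) • (v - u) := by
      linear_combination (norm := module) hxv - hxu
    have hA : vP - uP = (1 - t2 + s2) • (v - u) := by
      linear_combination (norm := module) ((-1 : ℝ)) • hD - hsub
    set lam := 1 - t2 + s2 with hlam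
    have hlam0 : lam ≠ 0 := by
      intro h
      apply hPQ
      have : vP - uP = 0 := by rw [hA, h, zero_smul]
      have := sub_eq_zero.mp this
      exact this.symm
    have hlampos : 0 < lam := lt_of_le_of_ne (by simp only [hlam]; linarith) (Ne.symm hlam0)
    set r := s2 / lam with hrdef
    have hr : r * lam = s2 := div_mul_cancel₀ s2 hlam0
    have hr0 : 0 ≤ r := div_nonneg hs2 hlampos.le
    have hr1 : r ≤ 1 := by
      rw [hrdef, div_le_one hlampos]
      simp only [hlam]; linarith
    refine ⟨1 - r, r, by linarith, hr0, by ring, ?_⟩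
    calc (1 - r) • uP + r • vP = uP + r • (vP - uP) := by module
      _ = uP + r • (lam • (v - u)) := by rw [← hA]
      _ = uP + (r * lam) • (v - u) := by rw [smul_smul]
      _ = uP + s2 • (v - u) := by rw [hr]
      _ = x := hx2.symm
  · -- segment ⊆ face : face is convex and contains uP, vP
    have huPF : uP ∈ polyFace P c := ⟨huP.1, huPmin⟩
    have hvPF : vP ∈ polyFace P c := ⟨hvP.1, hvPmin⟩
    have hconv : Convex ℝ (polyFace P c) := by
      intro x hx y hy a b ha hb hab
      refine ⟨hPconv hx.1 hy.1 ha hb hab, fun z hz => ?_⟩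
      have h1 := hx.2 z hz
      have h2 := hy.2 z hz
      rw [inner_add_right, real_inner_smul_right, real_inner_smul_right]
      calc a * ⟪c, x⟫ + b * ⟪c, y⟫ ≤ a * ⟪c, z⟫ + b * ⟪c, z⟫ :=
            add_le_add (mul_le_mul_of_nonneg_left h1 ha) (mul_le_mul_of_nonneg_left h2 hb)
        _ = ⟪c, z⟫ := by rw [← add_mul, hab, one_mul]
    exact hconv.segment_subset huPF hvPF


theorem stmt10 {d : ℕ} (P Q : Set (Esp d)) (hP : IsPolytope P) (hQ : IsPolytope Q)
    (u v uP uQ vP vQ : Esp d)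
    (huv : polyAdj (P + Q) u v)
    (huP : uP ∈ polyVerts P) (huQ : uQ ∈ polyVerts Q) (hu : u = uP + uQ)
    (hvP : vP ∈ polyVerts P) (hvQ : vQ ∈ polyVerts Q) (hv : v = vP + vQ) :
    (polyAdj P uP vP ∨ uP = vP) ∧ (polyAdj Q uQ vQ ∨ uQ = vQ) := by
  constructor
  · exact key P Q hP hQ u v uP uQ vP vQ huv huP huQ hu hvP hvQ hv
  · have hcomm : P + Q = Q + P := add_comm P Q
    rw [hcomm] at huv
    exact key Q P hQ hP u v uQ uP vQ vP huv huQ huP (by rw [hu, add_comm]) hvQ hvP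
      (by rw [hv, add_comm])
end
end

section
/- Let P and Q be polytopes in ℝ^d. There exists an injection φ from the vertex set of P into the vertex set of P + Q such that for every vertex u of P, one has φ(u) = u + v for some vertex v of Q. -/
open Pointwise
open scoped RealInnerProductSpace

noncomputable section

-- auxiliary lemmas for stmt11

lemma exposed_vertex {d : ℕ} {P : Set (Esp d)} (hP : IsPolytope P) {u : Esp d}
    (hu : u ∈ Set.extremePoints ℝ P) :
    ∃ f : Esp d →L[ℝ] ℝ, (∀ p ∈ P, f u ≤ f p) ∧ ∀ p ∈ P, f p ≤ f u → p = u := by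
  obtain ⟨s, hs, rfl⟩ := hP
  have hus : u ∈ (s : Set (Esp d)) := extremePoints_convexHull_subset hu
  set A : Set (Esp d) := (s : Set (Esp d)) \ {u} with hA_def
  have hins : (s : Set (Esp d)) = insert u A := by
    rw [hA_def, Set.insert_diff_singleton, Set.insert_eq_of_mem hus]
  by_cases hA : A.Nonempty
  · have hAfin : A.Finite := s.finite_toSet.diff
    have hAcl : IsClosed (convexHull ℝ A) := (hAfin.isCompact_convexHull ℝ).isClosed
    have hunot : u ∉ convexHull ℝ A := by
      intro h
      have hmem : u ∈ (convexHull ℝ A).extremePoints ℝ := by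
        refine ⟨h, fun x₁ h₁ x₂ h₂ hseg => ?_⟩
        exact hu.2 (convexHull_mono Set.diff_subset h₁)
          (convexHull_mono Set.diff_subset h₂) hseg
      exact (extremePoints_convexHull_subset hmem).2 rfl
    obtain ⟨f, r, hfr, hrf⟩ :=
      geometric_hahn_banach_point_closed (convex_convexHull ℝ A) hAcl hunot
    have hdecomp : ∀ p ∈ convexHull ℝ (s : Set (Esp d)),
        ∃ a b : ℝ, ∃ z ∈ convexHull ℝ A, 0 ≤ a ∧ 0 ≤ b ∧ a + b = 1 ∧ a • u + b • z = p := by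
      intro p hp
      rw [hins, convexHull_insert hA, mem_convexJoin] at hp
      obtain ⟨x, hx, z, hz, hseg⟩ := hp
      rw [Set.mem_singleton_iff] at hx
      subst hx
      obtain ⟨a, b, ha, hb, hab, habp⟩ := hseg
      exact ⟨a, b, z, hz, ha, hb, hab, habp⟩
    refine ⟨f, ?_, ?_⟩
    · intro p hp
      obtain ⟨a, b, z, hz, ha, hb, hab, habp⟩ := hdecomp p hp
      have hz' : f u < f z := hfr.trans (hrf z hz)
      have hfp : f p = a * f u + b * f z := by
        rw [← habp]; simp [smul_eq_mul]
      have key : f p - f u = b * (f z - f u) := by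
        linear_combination hfp + f u * hab
      linarith [mul_nonneg hb (sub_nonneg.mpr hz'.le)]
    · intro p hp hple
      obtain ⟨a, b, z, hz, ha, hb, hab, habp⟩ := hdecomp p hp
      have hz' : f u < f z := hfr.trans (hrf z hz)
      have hfp : f p = a * f u + b * f z := by
        rw [← habp]; simp [smul_eq_mul]
      have key : f p - f u = b * (f z - f u) := by
        linear_combination hfp + f u * hab
      have hb0 : b = 0 := by
        rcases eq_or_lt_of_le hb with h | h
        · exact h.symm
        · exfalso; linarith [mul_pos h (sub_pos.mpr hz')]
      have ha1 : a = 1 := by linarith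
      rw [← habp, hb0, ha1, one_smul, zero_smul, add_zero]
  · have hsub : (s : Set (Esp d)) = {u} := by
      rw [Set.not_nonempty_iff_eq_empty] at hA
      rw [hins, hA]; simp
    refine ⟨0, ?_, ?_⟩
    · intro p _; simp
    · intro p hp _
      rw [hsub, convexHull_singleton] at hp
      exact hp

lemma min_extreme {d : ℕ} {Q : Set (Esp d)} (hQ : IsPolytope Q) (f : Esp d →L[ℝ] ℝ) :
    ∃ v ∈ Set.extremePoints ℝ Q, ∀ q ∈ Q, f v ≤ f q := by
  obtain ⟨t, ht, rfl⟩ := hQ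
  set Qs := convexHull ℝ (t : Set (Esp d)) with hQs
  have hcomp : IsCompact Qs := t.finite_toSet.isCompact_convexHull ℝ
  have hE : Qs.extremePoints ℝ ⊆ (t : Set (Esp d)) := extremePoints_convexHull_subset
  have hEfin : (Qs.extremePoints ℝ).Finite := t.finite_toSet.subset hE
  have hQeq : convexHull ℝ (Qs.extremePoints ℝ) = Qs := by
    have hKM := closure_convexHull_extremePoints hcomp (convex_convexHull ℝ _)
    conv_rhs => rw [← hKM]
    exact (hEfin.isCompact_convexHull ℝ).isClosed.closure_eq.symm
  have hEne : (Qs.extremePoints ℝ).Nonempty := by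
    by_contra h
    rw [Set.not_nonempty_iff_eq_empty] at h
    rw [h, convexHull_empty] at hQeq
    have hne : Qs.Nonempty := (Finset.coe_nonempty.mpr ht).convexHull
    exact hne.ne_empty hQeq.symm
  obtain ⟨v, hv, hmin⟩ := Set.exists_min_image _ f hEfin hEne
  refine ⟨v, hv, ?_⟩
  intro q hq
  rw [← hQeq] at hq
  have hconv : Convex ℝ {x : Esp d | f v ≤ f x} :=
    convex_halfSpace_ge (f.toLinearMap.isLinear) (f v)
  exact convexHull_min (fun e he => hmin e he) hconv hq

lemma sum_extreme {d : ℕ} {P Q : Set (Esp d)} {u v : Esp d} (f : Esp d →L[ℝ] ℝ)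
    (huP : u ∈ P) (hf1 : ∀ p ∈ P, f u ≤ f p) (hf2 : ∀ p ∈ P, f p ≤ f u → p = u)
    (hv : v ∈ Set.extremePoints ℝ Q) (hvmin : ∀ q ∈ Q, f v ≤ f q) :
    u + v ∈ Set.extremePoints ℝ (P + Q) := by
  refine ⟨Set.add_mem_add huP hv.1, ?_⟩
  rintro x₁ hx₁ x₂ hx₂ ⟨a, b, ha, hb, hab, habx⟩
  obtain ⟨p₁, hp₁, q₁, hq₁, rfl⟩ := Set.mem_add.mp hx₁
  obtain ⟨p₂, hp₂, q₂, hq₂, rfl⟩ := Set.mem_add.mp hx₂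
  have hfx : a * (f p₁ + f q₁) + b * (f p₂ + f q₂) = f u + f v := by
    have := congrArg f habx
    simpa [smul_eq_mul, mul_add] using this
  have h1 : f u ≤ f p₁ := hf1 _ hp₁
  have h2 : f u ≤ f p₂ := hf1 _ hp₂
  have h3 : f v ≤ f q₁ := hvmin _ hq₁
  have h4 : f v ≤ f q₂ := hvmin _ hq₂
  have hsum : a * (f p₁ - f u) + a * (f q₁ - f v) + b * (f p₂ - f u) + b * (f q₂ - f v) = 0 := by
    linear_combination hfx - (f u + f v) * hab
  have t1 : 0 ≤ a * (f p₁ - f u) := mul_nonneg ha.le (by linarith)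
  have t2 : 0 ≤ a * (f q₁ - f v) := mul_nonneg ha.le (by linarith)
  have t3 : 0 ≤ b * (f p₂ - f u) := mul_nonneg hb.le (by linarith)
  have t4 : 0 ≤ b * (f q₂ - f v) := mul_nonneg hb.le (by linarith)
  have z1 : a * (f p₁ - f u) = 0 := le_antisymm (by linarith) t1
  have z3 : b * (f p₂ - f u) = 0 := le_antisymm (by linarith) t3
  have hp1u : p₁ = u := by
    apply hf2 _ hp₁
    rcases mul_eq_zero.mp z1 with h | h
    · exact absurd h ha.ne'
    · linarith
  have hp2u : p₂ = u := by
    apply hf2 _ hp₂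
    rcases mul_eq_zero.mp z3 with h | h
    · exact absurd h hb.ne'
    · linarith
  rw [hp1u, hp2u] at habx
  have hvseg : v ∈ openSegment ℝ q₁ q₂ := by
    refine ⟨a, b, ha, hb, hab, ?_⟩
    have heq : a • (u + q₁) + b • (u + q₂) = (a • u + b • u) + (a • q₁ + b • q₂) := by
      rw [smul_add, smul_add]; abel
    rw [heq, ← add_smul, hab, one_smul] at habx
    exact add_left_cancel habx
  obtain ⟨hq1v, hq2v⟩ := (mem_extremePoints.mp hv).2 _ hq₁ _ hq₂ hvseg
  rw [hp1u, hq1v]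

lemma unique_decomp {d : ℕ} {P Q : Set (Esp d)} {w p q p' q' : Esp d}
    (hw : w ∈ Set.extremePoints ℝ (P + Q))
    (hp : p ∈ P) (hq : q ∈ Q) (hp' : p' ∈ P) (hq' : q' ∈ Q)
    (h1 : p + q = w) (h2 : p' + q' = w) : p = p' := by
  have hm1 : p + q' ∈ P + Q := Set.add_mem_add hp hq'
  have hm2 : p' + q ∈ P + Q := Set.add_mem_add hp' hq
  have hseg : w ∈ openSegment ℝ (p + q') (p' + q) := by
    refine ⟨1/2, 1/2, by norm_num, by norm_num, by norm_num, ?_⟩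
    have : (1/2 : ℝ) • (p + q') + (1/2 : ℝ) • (p' + q)
        = (1/2 : ℝ) • ((p + q) + (p' + q')) := by
      module
    rw [this, h1, h2, ← two_smul ℝ w, smul_smul]
    norm_num
  obtain ⟨e1, e2⟩ := (mem_extremePoints.mp hw).2 _ hm1 _ hm2 hseg
  have : p + q' = p + q := by rw [e1, ← h1]
  have hqq : q' = q := add_left_cancel this
  have : p' + q = p + q := by rw [e2, ← h1]
  exact (add_right_cancel this).symm


theorem stmt11 {d : ℕ} (P Q : Set (Esp d)) (hP : IsPolytope P) (hQ : IsPolytope Q) :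
    ∃ φ : Esp d → Esp d,
      Set.InjOn φ (polyVerts P) ∧
      Set.MapsTo φ (polyVerts P) (polyVerts (P + Q)) ∧
      ∀ u ∈ polyVerts P, ∃ v ∈ polyVerts Q, φ u = u + v := by
  have key : ∀ u : Esp d, ∃ v : Esp d, u ∈ polyVerts P →
      v ∈ polyVerts Q ∧ u + v ∈ polyVerts (P + Q) := by
    intro u
    by_cases hu : u ∈ polyVerts P
    · obtain ⟨f, hf1, hf2⟩ := exposed_vertex hP hu
      obtain ⟨v, hv, hvmin⟩ := min_extreme hQ f
      exact ⟨v, fun _ => ⟨hv, sum_extreme f hu.1 hf1 hf2 hv hvmin⟩⟩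
    · exact ⟨0, fun h => absurd h hu⟩
  choose v hv using key
  refine ⟨fun u => u + v u, ?_, ?_, ?_⟩
  · intro u hu u' hu' heq
    obtain ⟨hv1, hw1⟩ := hv u hu
    obtain ⟨hv2, hw2⟩ := hv u' hu'
    exact unique_decomp hw1 hu.1 hv1.1 hu'.1 hv2.1 rfl heq.symm
  · intro u hu
    exact (hv u hu).2
  · intro u hu
    exact ⟨v u, (hv u hu).1, rfl⟩
end
end

section
/- Let P and Q be polytopes in ℝ^d, and let φ be an injection from the vertex set of P into the vertex set of P + Q such that for every vertex u of P, φ(u) = u + v for some vertex v of Q. If φ is a bijection onto the vertex set of P + Q, then the normal fans of P and P + Q coincide; that is, for every vector c, {c' : F_P(c) ⊆ F_P(c')} = {c' : F_{P+Q}(c) ⊆ F_{P+Q}(c')}. -/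
open Pointwise
open scoped RealInnerProductSpace

noncomputable section

namespace Stmt12Aux

variable {d : ℕ}

lemma mem_polyFace {P : Set (Esp d)} {c x : Esp d} :
    x ∈ polyFace P c ↔ x ∈ P ∧ ∀ y ∈ P, ⟪c, x⟫ ≤ ⟪c, y⟫ := Iff.rfl

lemma inner_isLinear (c : Esp d) : IsLinearMap ℝ (fun y : Esp d => ⟪c, y⟫) :=
  ⟨fun x y => inner_add_right _ _ _, fun r x => real_inner_smul_right _ _ _⟩

lemma hull_le_inner {s : Set (Esp d)} {c : Esp d} {a : ℝ}
    (h : ∀ x ∈ s, a ≤ ⟪c, x⟫) : ∀ y ∈ convexHull ℝ s, a ≤ ⟪c, y⟫ :=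
  fun _ hy => convexHull_min h (convex_halfSpace_ge (inner_isLinear c) a) hy

lemma poly_convex {P : Set (Esp d)} (hP : IsPolytope P) : Convex ℝ P := by
  obtain ⟨s, -, rfl⟩ := hP; exact convex_convexHull ℝ _

lemma poly_compact {P : Set (Esp d)} (hP : IsPolytope P) : IsCompact P := by
  obtain ⟨s, -, rfl⟩ := hP; exact s.finite_toSet.isCompact_convexHull (𝕜 := ℝ)

lemma poly_nonempty {P : Set (Esp d)} (hP : IsPolytope P) : P.Nonempty := by
  obtain ⟨s, ⟨x, hx⟩, rfl⟩ := hP; exact ⟨x, subset_convexHull ℝ _ hx⟩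

lemma poly_add {P Q : Set (Esp d)} (hP : IsPolytope P) (hQ : IsPolytope Q) :
    IsPolytope (P + Q) := by
  classical
  obtain ⟨s, ⟨x, hx⟩, rfl⟩ := hP
  obtain ⟨t, ⟨y, hy⟩, rfl⟩ := hQ
  exact ⟨s + t, ⟨x + y, Finset.add_mem_add hx hy⟩, by
    rw [Finset.coe_add, convexHull_add]⟩

lemma face_subset (P : Set (Esp d)) (c : Esp d) : polyFace P c ⊆ P := fun _ hx => hx.1

lemma face_convex {P : Set (Esp d)} (hP : Convex ℝ P) (c : Esp d) :
    Convex ℝ (polyFace P c) := by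
  intro x hx y hy a b ha hb hab
  refine ⟨hP hx.1 hy.1 ha hb hab, fun z hz => ?_⟩
  have h : ⟪c, a • x + b • y⟫ = a * ⟪c, x⟫ + b * ⟪c, y⟫ := by
    rw [inner_add_right, real_inner_smul_right, real_inner_smul_right]
  rw [h]
  calc a * ⟪c, x⟫ + b * ⟪c, y⟫ ≤ a * ⟪c, z⟫ + b * ⟪c, z⟫ :=
        add_le_add (mul_le_mul_of_nonneg_left (hx.2 z hz) ha)
          (mul_le_mul_of_nonneg_left (hy.2 z hz) hb)
    _ = ⟪c, z⟫ := by rw [← add_mul, hab, one_mul]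

lemma face_isClosed {P : Set (Esp d)} (hP : IsClosed P) (c : Esp d) :
    IsClosed (polyFace P c) := by
  have h : polyFace P c = P ∩ ⋂ y ∈ P, {x : Esp d | ⟪c, x⟫ ≤ ⟪c, y⟫} := by
    ext x; simp [polyFace, Set.mem_iInter]
  rw [h]
  exact hP.inter (isClosed_biInter fun y _ =>
    isClosed_le (Continuous.inner continuous_const continuous_id) continuous_const)

lemma face_nonempty {P : Set (Esp d)} (hP : IsPolytope P) (c : Esp d) :
    (polyFace P c).Nonempty := by
  have hcont : Continuous fun x : Esp d => ⟪c, x⟫ :=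
    Continuous.inner continuous_const continuous_id
  obtain ⟨x, hx, hmin⟩ := (poly_compact hP).exists_isMinOn (poly_nonempty hP) hcont.continuousOn
  exact ⟨x, hx, fun y hy => (isMinOn_iff.mp hmin) y hy⟩

lemma face_isCompact {P : Set (Esp d)} (hP : IsPolytope P) (c : Esp d) :
    IsCompact (polyFace P c) :=
  (poly_compact hP).of_isClosed_subset (face_isClosed (poly_compact hP).isClosed c) (face_subset P c)

lemma face_isExtreme {P : Set (Esp d)} (hP : Convex ℝ P) (c : Esp d) :
    IsExtreme ℝ P (polyFace P c) := by
  refine ⟨face_subset P c, ?_⟩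
  rintro x₁ h₁ x₂ h₂ x hx ⟨a, b, ha, hb, hab, hsum⟩
  have e : a * ⟪c, x₁⟫ + b * ⟪c, x₂⟫ = ⟪c, x⟫ := by
    rw [← hsum, inner_add_right, real_inner_smul_right, real_inner_smul_right]
  have l1 := hx.2 x₁ h₁
  have l2 := hx.2 x₂ h₂
  have h1 := mul_le_mul_of_nonneg_left l1 ha.le
  have h2 := mul_le_mul_of_nonneg_left l2 hb.le
  have hm : a * ⟪c, x⟫ + b * ⟪c, x⟫ = ⟪c, x⟫ := by rw [← add_mul, hab, one_mul]
  have k1 : ⟪c, x₁⟫ = ⟪c, x⟫ := mul_left_cancel₀ ha.ne' (by linarith)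
  have k2 : ⟪c, x₂⟫ = ⟪c, x⟫ := mul_left_cancel₀ hb.ne' (by linarith)
  exact ⟨h₁, fun y hy => k1.le.trans (hx.2 y hy)⟩

lemma face_subset_closed {P : Set (Esp d)} (hP : IsPolytope P) {c : Esp d} {C : Set (Esp d)}
    (hC : Convex ℝ C) (hC' : IsClosed C)
    (h : (polyFace P c).extremePoints ℝ ⊆ C) : polyFace P c ⊆ C := by
  have hKM := closure_convexHull_extremePoints (face_isCompact hP c)
    (face_convex (poly_convex hP) c)
  calc polyFace P c = closure (convexHull ℝ ((polyFace P c).extremePoints ℝ)) := hKM.symm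
    _ ⊆ closure (convexHull ℝ C) := closure_mono (convexHull_mono h)
    _ = C := by rw [hC.convexHull_eq, hC'.closure_eq]

lemma face_add {P Q : Set (Esp d)} (hP : IsPolytope P) (hQ : IsPolytope Q) (c : Esp d) :
    polyFace (P + Q) c = polyFace P c + polyFace Q c := by
  obtain ⟨x₀, hx₀⟩ := face_nonempty hP c
  obtain ⟨y₀, hy₀⟩ := face_nonempty hQ c
  apply Set.Subset.antisymm
  · rintro z ⟨hz, hmin⟩
    obtain ⟨x, hx, y, hy, rfl⟩ := Set.mem_add.1 hz
    have h0 : ⟪c, x + y⟫ ≤ ⟪c, x₀ + y₀⟫ := hmin _ (Set.add_mem_add hx₀.1 hy₀.1)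
    rw [inner_add_right, inner_add_right] at h0
    have hx0 : ⟪c, x₀⟫ ≤ ⟪c, x⟫ := hx₀.2 x hx
    have hy0 : ⟪c, y₀⟫ ≤ ⟪c, y⟫ := hy₀.2 y hy
    have hxx : ⟪c, x⟫ = ⟪c, x₀⟫ := by linarith
    have hyy : ⟪c, y⟫ = ⟪c, y₀⟫ := by linarith
    exact Set.add_mem_add ⟨hx, fun y' hy' => hxx.le.trans (hx₀.2 y' hy')⟩
      ⟨hy, fun y' hy' => hyy.le.trans (hy₀.2 y' hy')⟩
  · rintro z hz
    obtain ⟨x, hx, y, hy, rfl⟩ := Set.mem_add.1 hz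
    refine ⟨Set.add_mem_add hx.1 hy.1, fun w hw => ?_⟩
    obtain ⟨x', hx', y', hy', rfl⟩ := Set.mem_add.1 hw
    rw [inner_add_right, inner_add_right]
    exact add_le_add (hx.2 x' hx') (hy.2 y' hy')

lemma unique_decomp {P Q : Set (Esp d)} {z x y x' y' : Esp d}
    (hz : z ∈ Set.extremePoints ℝ (P + Q))
    (hx : x ∈ P) (hy : y ∈ Q) (hx' : x' ∈ P) (hy' : y' ∈ Q)
    (h1 : x + y = z) (h2 : x' + y' = z) : x = x' ∧ y = y' := by
  have hab : (x + y') + (x' + y) = z + z := by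
    have h : (x + y') + (x' + y) = (x + y) + (x' + y') := by abel
    rw [h, h1, h2]
  have hkey : x + y' = x' + y := by
    by_contra hne
    have hmem : z ∈ openSegment ℝ (x + y') (x' + y) := by
      refine ⟨1/2, 1/2, by norm_num, by norm_num, by norm_num, ?_⟩
      rw [← smul_add, hab, smul_add,
        show ((1:ℝ)/2) • z + ((1:ℝ)/2) • z = (((1:ℝ)/2) + ((1:ℝ)/2)) • z from (add_smul _ _ _).symm]
      norm_num
    have h := hz.2 (Set.add_mem_add hx hy') (Set.add_mem_add hx' hy) hmem
    exact hne (h.trans (hz.2 (Set.add_mem_add hx' hy) (Set.add_mem_add hx hy') (by rw [openSegment_symm]; exact hmem)).symm)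
  have hxx : x + x = x' + x' := by
    have hsum : (x + y') + (x + y) = (x' + y) + (x' + y') := by rw [hkey, h1, h2]
    have h' : (x + x) + (y + y') = (x' + x') + (y + y') := by
      calc (x + x) + (y + y') = (x + y') + (x + y) := by abel
        _ = (x' + y) + (x' + y') := hsum
        _ = (x' + x') + (y + y') := by abel
    exact add_right_cancel h'
  have hx2 : x = x' := by
    have h : (2:ℝ) • x = (2:ℝ) • x' := by rw [two_smul, two_smul]; exact hxx
    exact smul_right_injective _ (by norm_num : (2:ℝ) ≠ 0) h
  refine ⟨hx2, ?_⟩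
  have : x + y = x + y' := by rw [h1, hx2]; exact h2.symm
  exact add_left_cancel this

lemma extreme_factor_left {P Q : Set (Esp d)} {z x y : Esp d}
    (hz : z ∈ Set.extremePoints ℝ (P + Q))
    (hx : x ∈ P) (hy : y ∈ Q) (hxy : x + y = z) : x ∈ Set.extremePoints ℝ P := by
  refine ⟨hx, fun a ha b hb hseg => ?_⟩
  obtain ⟨s, t, hs, ht, hst, heq⟩ := hseg
  have hz2 : z ∈ openSegment ℝ (a + y) (b + y) := by
    refine ⟨s, t, hs, ht, hst, ?_⟩
    rw [smul_add, smul_add, ← hxy, ← heq]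
    rw [show s • a + s • y + (t • b + t • y) = (s • a + t • b) + (s + t) • y by
      rw [add_smul]; abel, hst, one_smul]
  have h := hz.2 (Set.add_mem_add ha hy) (Set.add_mem_add hb hy) hz2
  exact add_right_cancel (h.trans hxy.symm)

lemma extreme_of_face_singleton {P : Set (Esp d)} (hP : Convex ℝ P) {c w : Esp d}
    (h : polyFace P c = {w}) : w ∈ Set.extremePoints ℝ P :=
  isExtreme_singleton.1 (h ▸ face_isExtreme hP c)

lemma face_add_single {P : Set (Esp d)} {c c₁ : Esp d} {u : Esp d} {ε : ℝ} (hε : 0 < ε)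
    (hu : u ∈ polyFace P c) (hu₁ : polyFace P c₁ = {u}) :
    polyFace P (c + ε • c₁) = {u} := by
  have huP : u ∈ P := hu.1
  have hu₁' : u ∈ polyFace P c₁ := by rw [hu₁]; rfl
  apply Set.Subset.antisymm
  · intro x hx
    have h1 : ⟪c + ε • c₁, x⟫ ≤ ⟪c + ε • c₁, u⟫ := hx.2 u huP
    rw [inner_add_left, inner_add_left, real_inner_smul_left, real_inner_smul_left] at h1
    have h2 : ⟪c, u⟫ ≤ ⟪c, x⟫ := hu.2 x hx.1
    have h3 : ⟪c₁, x⟫ ≤ ⟪c₁, u⟫ := by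
      have : ε * ⟪c₁, x⟫ ≤ ε * ⟪c₁, u⟫ := by linarith
      exact le_of_mul_le_mul_left this hε
    have hxm : x ∈ polyFace P c₁ := ⟨hx.1, fun y hy => h3.trans (hu₁'.2 y hy)⟩
    rwa [hu₁] at hxm
  · intro x hx
    rw [Set.mem_singleton_iff] at hx
    subst hx
    refine ⟨huP, fun y hy => ?_⟩
    rw [inner_add_left, inner_add_left, real_inner_smul_left, real_inner_smul_left]
    exact add_le_add (hu.2 y hy) (mul_le_mul_of_nonneg_left (hu₁'.2 y hy) hε.le)

lemma perturb {P : Set (Esp d)} (hP : IsPolytope P) (c c₁ : Esp d) :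
    ∃ ε : ℝ, 0 < ε ∧ polyFace P (c + ε • c₁) ⊆ polyFace P c := by
  classical
  obtain ⟨s, hs, rfl⟩ := hP
  set f : Esp d → ℝ := fun x => ⟪c, x⟫ with hf
  set m := s.inf' hs f with hm
  set s₀ := s.filter (fun x => f x = m) with hs₀def
  have hs₀ : s₀.Nonempty := by
    obtain ⟨x, hx, hfx⟩ := s.exists_mem_eq_inf' hs f
    exact ⟨x, Finset.mem_filter.2 ⟨hx, hfx.symm⟩⟩
  have hs₀face : (s₀ : Set (Esp d)) ⊆ polyFace (convexHull ℝ (s : Set (Esp d))) c := by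
    intro x hx
    rw [Finset.mem_coe, Finset.mem_filter] at hx
    refine ⟨subset_convexHull ℝ _ hx.1, hull_le_inner (fun y hy => ?_)⟩
    exact le_of_eq_of_le hx.2 (Finset.inf'_le f (Finset.mem_coe.1 hy))
  set g : ℝ := if h : (s \ s₀).Nonempty then (s \ s₀).inf' h f - m else 1 with hg_def
  have hg : 0 < g := by
    rw [hg_def]
    split_ifs with h
    · obtain ⟨x, hx, hfx⟩ := (s \ s₀).exists_mem_eq_inf' h f
      rw [hfx]
      have hxs : x ∈ s := (Finset.mem_sdiff.1 hx).1
      have hxns : x ∉ s₀ := (Finset.mem_sdiff.1 hx).2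
      have h1 : m ≤ f x := Finset.inf'_le f hxs
      have h2 : f x ≠ m := fun he => hxns (Finset.mem_filter.2 ⟨hxs, he⟩)
      have : m < f x := lt_of_le_of_ne h1 (Ne.symm h2)
      linarith
    · exact one_pos
  set B := s.sup' hs (fun x => |⟪c₁, x⟫|) with hB_def
  have hB : 0 ≤ B := by
    obtain ⟨x, hx⟩ := hs
    exact le_trans (abs_nonneg (⟪c₁, x⟫)) (Finset.le_sup' (fun x : Esp d => |⟪c₁, x⟫|) hx)
  set ε := g / (2 * B + 1) with hε_def
  have hε : 0 < ε := by positivity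
  have hεeq : ε * (2 * B + 1) = g := by
    rw [hε_def]
    field_simp
  refine ⟨ε, hε, ?_⟩
  have key : ∀ x ∈ s, x ∈ polyFace (convexHull ℝ (s : Set (Esp d))) (c + ε • c₁) → x ∈ s₀ := by
    intro x hxs hxf
    by_contra hxn
    obtain ⟨x₀, hx₀⟩ := hs₀
    have hx₀s : x₀ ∈ s := (Finset.mem_filter.1 hx₀).1
    have hfx₀ : f x₀ = m := (Finset.mem_filter.1 hx₀).2
    have h1 : ⟪c + ε • c₁, x⟫ ≤ ⟪c + ε • c₁, x₀⟫ :=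
      hxf.2 x₀ (subset_convexHull ℝ _ hx₀s)
    rw [inner_add_left, inner_add_left, real_inner_smul_left, real_inner_smul_left] at h1
    have hgx : m + g ≤ f x := by
      have hne : (s \ s₀).Nonempty := ⟨x, Finset.mem_sdiff.2 ⟨hxs, hxn⟩⟩
      have hle := Finset.inf'_le (s := s \ s₀) f (Finset.mem_sdiff.2 ⟨hxs, hxn⟩)
      rw [hg_def, dif_pos hne]
      linarith
    have hb1 : |⟪c₁, x⟫| ≤ B := Finset.le_sup' (fun x : Esp d => |⟪c₁, x⟫|) hxs
    have hb0 : |⟪c₁, x₀⟫| ≤ B := Finset.le_sup' (fun x : Esp d => |⟪c₁, x⟫|) hx₀s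
    rw [abs_le] at hb1 hb0
    have e1 : ε * ⟪c₁, x₀⟫ ≤ ε * B := mul_le_mul_of_nonneg_left hb0.2 hε.le
    have e2 : ε * (-B) ≤ ε * ⟪c₁, x⟫ := mul_le_mul_of_nonneg_left hb1.1 hε.le
    have hfc : f x = ⟪c, x⟫ := rfl
    have hfc0 : f x₀ = ⟪c, x₀⟫ := rfl
    nlinarith [hε.le, hB]
  intro z hz
  refine face_subset_closed ⟨s, hs, rfl⟩
    (face_convex (convex_convexHull ℝ _) c)
    (face_isClosed (Set.Finite.isCompact_convexHull ℝ s.finite_toSet).isClosed c) ?_ hz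
  intro x hx
  have hxP : x ∈ polyFace (convexHull ℝ (s : Set (Esp d))) (c + ε • c₁) :=
    extremePoints_subset hx
  have hxs : x ∈ (s : Set (Esp d)) := by
    have hext : x ∈ Set.extremePoints ℝ (convexHull ℝ (s : Set (Esp d))) :=
      (face_isExtreme (convex_convexHull ℝ _) (c + ε • c₁)).extremePoints_subset_extremePoints hx
    exact extremePoints_convexHull_subset hext
  exact hs₀face (key x hxs hxP)

lemma exposed_of_vertex {P : Set (Esp d)} (hP : IsPolytope P) {w : Esp d}
    (hw : w ∈ Set.extremePoints ℝ P) : ∃ c : Esp d, polyFace P c = {w} := by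
  obtain ⟨s, hs, rfl⟩ := hP
  have hws : w ∈ (s : Set (Esp d)) := extremePoints_convexHull_subset hw
  by_cases hK : ((s : Set (Esp d)) \ {w}).Nonempty
  · set K := convexHull ℝ ((s : Set (Esp d)) \ {w}) with hKdef
    have hKconv : Convex ℝ K := convex_convexHull ℝ _
    have hKcl : IsClosed K :=
      (Set.Finite.isCompact_convexHull ℝ s.finite_toSet.diff).isClosed
    have hKsub : K ⊆ convexHull ℝ (s : Set (Esp d)) :=
      convexHull_mono Set.diff_subset
    have hwK : w ∉ K := by
      intro hwmem
      have h1 : w ∈ K.extremePoints ℝ :=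
        inter_extremePoints_subset_extremePoints_of_subset hKsub ⟨hwmem, hw⟩
      have h2 : w ∈ (s : Set (Esp d)) \ {w} := extremePoints_convexHull_subset h1
      exact h2.2 rfl
    obtain ⟨f, u, hfw, hfb⟩ := geometric_hahn_banach_point_closed hKconv hKcl hwK
    set c := (InnerProductSpace.toDual ℝ (Esp d)).symm f with hcdef
    have hc : ∀ x : Esp d, ⟪c, x⟫ = f x := fun x => InnerProductSpace.toDual_symm_apply
    have hmin : ∀ y ∈ (s : Set (Esp d)), ⟪c, w⟫ ≤ ⟪c, y⟫ := by
      intro y hy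
      rcases eq_or_ne y w with rfl | hne
      · exact le_rfl
      · have hyK : y ∈ K := subset_convexHull ℝ _ ⟨hy, hne⟩
        rw [hc, hc]
        exact (hfw.trans (hfb y hyK)).le
    refine ⟨c, Set.Subset.antisymm ?_ ?_⟩
    · intro x hx
      have hxw : ⟪c, x⟫ = ⟪c, w⟫ :=
        le_antisymm (hx.2 w (subset_convexHull ℝ _ hws)) (hull_le_inner hmin x hx.1)
      have hins : (s : Set (Esp d)) = insert w ((s : Set (Esp d)) \ {w}) := by
        rw [Set.insert_diff_singleton, Set.insert_eq_self.2 hws]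
      have hx1 := hx.1
      rw [hins, convexHull_insert hK, mem_convexJoin] at hx1
      obtain ⟨w', hw', z, hzK, hxz⟩ := hx1
      rw [Set.mem_singleton_iff] at hw'
      rw [hw'] at hxz
      obtain ⟨a, b, ha, hb, hab, hxe⟩ := hxz
      have hfz : ⟪c, w⟫ < ⟪c, z⟫ := by
        rw [hc, hc]; exact hfw.trans (hfb z hzK)
      have hcx : ⟪c, x⟫ = a * ⟪c, w⟫ + b * ⟪c, z⟫ := by
        rw [← hxe, inner_add_right, real_inner_smul_right, real_inner_smul_right]
      have ha' : a = 1 - b := by linarith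
      rw [ha', sub_mul, one_mul] at hcx
      have hprod : b * (⟪c, z⟫ - ⟪c, w⟫) = 0 := by rw [mul_sub]; linarith
      have hb0 : b = 0 := by
        rcases mul_eq_zero.1 hprod with h | h
        · exact h
        · exact absurd h (sub_ne_zero.2 hfz.ne')
      have ha1 : a = 1 := by linarith
      rw [Set.mem_singleton_iff, ← hxe, hb0, ha1, one_smul, zero_smul, add_zero]
    · intro x hx
      rw [Set.mem_singleton_iff] at hx
      subst hx
      exact ⟨subset_convexHull ℝ _ hws, hull_le_inner hmin⟩
  · have hsw : (s : Set (Esp d)) = {w} := by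
      rw [Set.not_nonempty_iff_eq_empty, Set.diff_eq_empty] at hK
      exact Set.Subset.antisymm hK (Set.singleton_subset_iff.2 hws)
    refine ⟨0, ?_⟩
    rw [hsw, convexHull_singleton]
    ext x
    simp only [polyFace, Set.mem_setOf_eq, Set.mem_singleton_iff]
    constructor
    · rintro ⟨hx, -⟩; exact hx
    · rintro rfl
      refine ⟨rfl, fun y hy => ?_⟩
      have hyx : y = x := hy
      subst hyx
      exact le_rfl

end Stmt12Aux

namespace Stmt12Aux

variable {d : ℕ}

lemma core {P Q : Set (Esp d)} (hP : IsPolytope P) (hQ : IsPolytope Q)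
    {φ : Esp d → Esp d}
    (hφ : ∀ u ∈ Set.extremePoints ℝ P, ∃ v ∈ Set.extremePoints ℝ Q, φ u = u + v)
    (hsurj : Set.SurjOn φ (Set.extremePoints ℝ P) (Set.extremePoints ℝ (P + Q)))
    {u v : Esp d} (hu : u ∈ Set.extremePoints ℝ P) (hv : φ u = u + v)
    {c : Esp d} (huc : u ∈ polyFace P c) : v ∈ polyFace Q c := by
  obtain ⟨c₁, hc₁⟩ := exposed_of_vertex hP hu
  obtain ⟨ε, hε, hQsub⟩ := perturb hQ c c₁
  have hPface : polyFace P (c + ε • c₁) = {u} := face_add_single hε huc hc₁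
  have hPQ : IsPolytope (P + Q) := poly_add hP hQ
  have hface : polyFace (P + Q) (c + ε • c₁) = {u} + polyFace Q (c + ε • c₁) := by
    rw [face_add hP hQ, hPface]
  obtain ⟨z, hz⟩ := (face_isCompact hPQ (c + ε • c₁)).extremePoints_nonempty
    (face_nonempty hPQ (c + ε • c₁))
  have hzPQ : z ∈ Set.extremePoints ℝ (P + Q) :=
    (face_isExtreme (poly_convex hPQ) _).extremePoints_subset_extremePoints hz
  have hzmem : z ∈ {u} + polyFace Q (c + ε • c₁) := hface ▸ (extremePoints_subset hz)
  obtain ⟨u', hu', q, hq, hzq⟩ := Set.mem_add.1 hzmem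
  rw [Set.mem_singleton_iff] at hu'
  rw [hu'] at hzq
  obtain ⟨u₀, hu₀, hz0⟩ := hsurj hzPQ
  obtain ⟨v₀, hv₀, hphi⟩ := hφ u₀ hu₀
  have hz0' : u₀ + v₀ = z := by rw [← hphi]; exact hz0
  obtain ⟨he1, he2⟩ := unique_decomp hzPQ (extremePoints_subset hu₀)
    (extremePoints_subset hv₀) (extremePoints_subset hu) (face_subset Q _ hq) hz0' hzq
  have hphiu : φ u = u + v₀ := by rw [← he1]; exact hphi
  have hvq : v = q := by
    have h := hv.symm.trans hphiu
    have := add_left_cancel h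
    rw [this, he2]
  rw [hvq]
  exact hQsub hq

lemma vertexQ {P Q : Set (Esp d)} (hP : IsPolytope P) (hQ : IsPolytope Q)
    {φ : Esp d → Esp d}
    (hφ : ∀ u ∈ Set.extremePoints ℝ P, ∃ v ∈ Set.extremePoints ℝ Q, φ u = u + v)
    (hsurj : Set.SurjOn φ (Set.extremePoints ℝ P) (Set.extremePoints ℝ (P + Q)))
    {w : Esp d} (hw : w ∈ Set.extremePoints ℝ Q) {c c' : Esp d}
    (hwc : w ∈ polyFace Q c) (hsub : polyFace P c ⊆ polyFace P c') :
    w ∈ polyFace Q c' := by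
  obtain ⟨c₂, hc₂⟩ := exposed_of_vertex hQ hw
  obtain ⟨ε, hε, hPsub⟩ := perturb hP c c₂
  have hQface : polyFace Q (c + ε • c₂) = {w} := face_add_single hε hwc hc₂
  have hPQ : IsPolytope (P + Q) := poly_add hP hQ
  have hface : polyFace (P + Q) (c + ε • c₂) = polyFace P (c + ε • c₂) + {w} := by
    rw [face_add hP hQ, hQface]
  obtain ⟨z, hz⟩ := (face_isCompact hPQ (c + ε • c₂)).extremePoints_nonempty
    (face_nonempty hPQ (c + ε • c₂))
  have hzPQ : z ∈ Set.extremePoints ℝ (P + Q) :=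
    (face_isExtreme (poly_convex hPQ) _).extremePoints_subset_extremePoints hz
  have hzmem : z ∈ polyFace P (c + ε • c₂) + {w} := hface ▸ (extremePoints_subset hz)
  obtain ⟨p, hp, w', hw', hzq⟩ := Set.mem_add.1 hzmem
  rw [Set.mem_singleton_iff] at hw'
  rw [hw'] at hzq
  have hpP : p ∈ P := face_subset P _ hp
  have hpext : p ∈ Set.extremePoints ℝ P :=
    extreme_factor_left hzPQ hpP (extremePoints_subset hw) hzq
  obtain ⟨u₀, hu₀, hz0⟩ := hsurj hzPQ
  obtain ⟨v₀, hv₀, hphi⟩ := hφ u₀ hu₀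
  have hz0' : u₀ + v₀ = z := by rw [← hphi]; exact hz0
  obtain ⟨he1, he2⟩ := unique_decomp hzPQ (extremePoints_subset hu₀)
    (extremePoints_subset hv₀) hpP (extremePoints_subset hw) hz0' hzq
  have hphip : φ p = p + w := by rw [← he1, ← he2]; exact hphi
  exact core hP hQ hφ hsurj hpext hphip (hsub (hPsub hp))

end Stmt12Aux

open Stmt12Aux in
theorem stmt12 {d : ℕ} (P Q : Set (Esp d)) (hP : IsPolytope P) (hQ : IsPolytope Q)
    (φ : Esp d → Esp d)
    (hφ : ∀ u ∈ polyVerts P, ∃ v ∈ polyVerts Q, φ u = u + v)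
    (hbij : Set.BijOn φ (polyVerts P) (polyVerts (P + Q))) :
    ∀ c : Esp d,
      {c' : Esp d | polyFace P c ⊆ polyFace P c'} =
      {c' : Esp d | polyFace (P + Q) c ⊆ polyFace (P + Q) c'} := by
  intro c
  ext c'
  simp only [Set.mem_setOf_eq]
  have hsurj : Set.SurjOn φ (Set.extremePoints ℝ P) (Set.extremePoints ℝ (P + Q)) :=
    hbij.surjOn
  have hφ' : ∀ u ∈ Set.extremePoints ℝ P, ∃ v ∈ Set.extremePoints ℝ Q, φ u = u + v := hφ
  constructor
  · intro hsub
    have hQsub : polyFace Q c ⊆ polyFace Q c' := by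
      apply face_subset_closed hQ (face_convex (poly_convex hQ) c')
        (face_isClosed (poly_compact hQ).isClosed c')
      intro w hw
      exact vertexQ hP hQ hφ' hsurj
        ((face_isExtreme (poly_convex hQ) c).extremePoints_subset_extremePoints hw)
        (extremePoints_subset hw) hsub
    rw [face_add hP hQ c, face_add hP hQ c']
    rintro z hz
    obtain ⟨x, hx, y, hy, rfl⟩ := Set.mem_add.1 hz
    exact Set.add_mem_add (hsub hx) (hQsub hy)
  · intro hsub x hx
    obtain ⟨y, hy⟩ := face_nonempty hQ c
    have hxy : x + y ∈ polyFace (P + Q) c := by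
      rw [face_add hP hQ c]; exact Set.add_mem_add hx hy
    have h2 := hsub hxy
    refine ⟨hx.1, fun x' hx' => ?_⟩
    have h3 := h2.2 (x' + y) (Set.add_mem_add hx' hy.1)
    rw [inner_add_right, inner_add_right] at h3
    linarith
end
end

section
/- Let P and Q be polytopes in ℝ^d and let u and v be two distinct vertices of P. Then u and v are adjacent in the graph of P if and only if there exist a vertex of Γ_{P,Q}(u) and a vertex of Γ_{P,Q}(v) that are adjacent in the graph of P + Q. -/
open Pointwise
open scoped RealInnerProductSpace

noncomputable section

namespace Stmt16Aux

variable {d : ℕ}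

noncomputable def amin (c : Esp d) (s : Finset (Esp d)) : Finset (Esp d) :=
  @Finset.filter _ (fun x => ∀ y ∈ s, ⟪c, x⟫ ≤ ⟪c, y⟫) (Classical.decPred _) s

lemma mem_amin {c : Esp d} {s : Finset (Esp d)} {x : Esp d} :
    x ∈ amin c s ↔ x ∈ s ∧ ∀ y ∈ s, ⟪c, x⟫ ≤ ⟪c, y⟫ := by
  simp [amin]

lemma amin_subset {c : Esp d} {s : Finset (Esp d)} : amin c s ⊆ s :=
  fun x hx => (mem_amin.1 hx).1

lemma amin_nonempty {c : Esp d} {s : Finset (Esp d)} (hs : s.Nonempty) :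
    (amin c s).Nonempty := by
  obtain ⟨x, hx, hmin⟩ := s.exists_min_image (fun y => ⟪c, y⟫) hs
  exact ⟨x, mem_amin.2 ⟨hx, hmin⟩⟩

lemma isLinearMap_inner (c : Esp d) : IsLinearMap ℝ (fun y : Esp d => ⟪c, y⟫) :=
  ⟨fun x y => inner_add_right c x y, fun r x => real_inner_smul_right c x r⟩

lemma hull_ge {c : Esp d} {s : Finset (Esp d)} {m : ℝ}
    (h : ∀ y ∈ s, m ≤ ⟪c, y⟫) :
    ∀ y ∈ convexHull ℝ (s : Set (Esp d)), m ≤ ⟪c, y⟫ :=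
  convexHull_min h (convex_halfSpace_ge (isLinearMap_inner c) m)

lemma hull_le {c : Esp d} {s : Finset (Esp d)} {m : ℝ}
    (h : ∀ y ∈ s, ⟪c, y⟫ ≤ m) :
    ∀ y ∈ convexHull ℝ (s : Set (Esp d)), ⟪c, y⟫ ≤ m :=
  convexHull_min h (convex_halfSpace_le (isLinearMap_inner c) m)

lemma amin_inner_eq {c : Esp d} {s : Finset (Esp d)} {x y : Esp d}
    (hx : x ∈ amin c s) (hy : y ∈ amin c s) : ⟪c, x⟫ = ⟪c, y⟫ :=
  le_antisymm ((mem_amin.1 hx).2 y (amin_subset hy)) ((mem_amin.1 hy).2 x (amin_subset hx))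

lemma face_hull (c : Esp d) {s : Finset (Esp d)} (hs : s.Nonempty) :
    polyFace (convexHull ℝ (s : Set (Esp d))) c
      = convexHull ℝ ((amin c s : Finset (Esp d)) : Set (Esp d)) := by
  classical
  obtain ⟨x₀, hx₀⟩ := amin_nonempty (c := c) hs
  obtain ⟨hx₀s, hx₀min⟩ := mem_amin.1 hx₀
  set m := ⟪c, x₀⟫ with hm
  have hlow : ∀ y ∈ convexHull ℝ (s : Set (Esp d)), m ≤ ⟪c, y⟫ := hull_ge hx₀min
  apply Set.Subset.antisymm
  · rintro z ⟨hzP, hzmin⟩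
    have hzm : ⟪c, z⟫ = m :=
      le_antisymm (hzmin x₀ (subset_convexHull ℝ _ hx₀s)) (hlow z hzP)
    obtain ⟨w, hw0, hw1, hwz⟩ := Finset.mem_convexHull.1 hzP
    have hsumz : ∑ y ∈ s, w y * ⟪c, y⟫ = m := by
      have : ⟪c, s.centerMass w id⟫ = ∑ y ∈ s, w y * ⟪c, y⟫ := by
        rw [Finset.centerMass_eq_of_sum_1 _ _ hw1, inner_sum]
        exact Finset.sum_congr rfl fun y _ => real_inner_smul_right c y (w y)
      rw [hwz, hzm] at this; exact this.symm
    have hsum : ∑ y ∈ s, w y * m = ∑ y ∈ s, w y * ⟪c, y⟫ := by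
      rw [hsumz, ← Finset.sum_mul, hw1, one_mul]
    have heach : ∀ y ∈ s, w y * m = w y * ⟪c, y⟫ :=
      (Finset.sum_eq_sum_iff_of_le
        (fun y hy => mul_le_mul_of_nonneg_left (hx₀min y hy) (hw0 y hy))).1 hsum
    rw [← hwz, ← Finset.centerMass_filter_ne_zero (w := w) (z := id)]
    refine Finset.centerMass_mem_convexHull _ (fun i hi => hw0 i (Finset.mem_filter.1 hi).1)
      ?_ (fun i hi => ?_)
    · rw [Finset.sum_filter_ne_zero, hw1]; exact one_pos
    · obtain ⟨his, hwi⟩ := Finset.mem_filter.1 hi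
      have : ⟪c, i⟫ = m := (mul_left_cancel₀ hwi (heach i his).symm)
      exact mem_amin.2 ⟨his, fun y hy => this ▸ hx₀min y hy⟩
  · intro z hz
    have hzs : z ∈ convexHull ℝ (s : Set (Esp d)) :=
      convexHull_mono (by exact_mod_cast (amin_subset (c := c) (s := s))) hz
    refine ⟨hzs, fun y hy => ?_⟩
    have hup : ⟪c, z⟫ ≤ m :=
      hull_le (fun a ha => le_of_eq (amin_inner_eq ha hx₀)) z hz
    exact hup.trans (hlow y hy)

end Stmt16Aux

namespace Stmt16Aux

variable {d : ℕ}

lemma face_isExtreme (P : Set (Esp d)) (c : Esp d) : IsExtreme ℝ P (polyFace P c) := by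
  refine ⟨fun x hx => hx.1, ?_⟩
  rintro x₁ hx₁ x₂ hx₂ z ⟨hzP, hzmin⟩ ⟨a, b, ha, hb, hab, hzz⟩
  have h1 : ⟪c, z⟫ ≤ ⟪c, x₁⟫ := hzmin x₁ hx₁
  have h2 : ⟪c, z⟫ ≤ ⟪c, x₂⟫ := hzmin x₂ hx₂
  have hz1 : ⟪c, z⟫ = a * ⟪c, x₁⟫ + b * ⟪c, x₂⟫ := by
    rw [← hzz, inner_add_right, real_inner_smul_right, real_inner_smul_right]
  have hz2 : a * ⟪c, z⟫ + b * ⟪c, z⟫ = ⟪c, z⟫ := by rw [← add_mul, hab, one_mul]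
  have e1 : ⟪c, x₁⟫ = ⟪c, z⟫ := by
    by_contra hne
    have hlt : ⟪c, z⟫ < ⟪c, x₁⟫ := lt_of_le_of_ne h1 (fun h => hne h.symm)
    have t1 := mul_lt_mul_of_pos_left hlt ha
    have t2 := mul_le_mul_of_nonneg_left h2 hb.le
    linarith
  have e2 : ⟪c, x₂⟫ = ⟪c, z⟫ := by
    by_contra hne
    have hlt : ⟪c, z⟫ < ⟪c, x₂⟫ := lt_of_le_of_ne h2 (fun h => hne h.symm)
    have t1 := mul_lt_mul_of_pos_left hlt hb
    have t2 := mul_le_mul_of_nonneg_left h1 ha.le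
    linarith
  exact ⟨hx₁, fun y hy => e1 ▸ hzmin y hy⟩

lemma face_nonempty {P : Set (Esp d)} (hP : IsPolytope P) (c : Esp d) :
    (polyFace P c).Nonempty := by
  obtain ⟨s, hs, rfl⟩ := hP
  obtain ⟨x₀, hx₀⟩ := amin_nonempty (c := c) hs
  exact ⟨x₀, (face_hull c hs).symm ▸ subset_convexHull ℝ _ hx₀⟩

lemma face_isPolytope {P : Set (Esp d)} (hP : IsPolytope P) (c : Esp d) :
    IsPolytope (polyFace P c) := by
  obtain ⟨s, hs, rfl⟩ := hP
  exact ⟨amin c s, amin_nonempty hs, face_hull c hs⟩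

lemma face_add {P Q : Set (Esp d)} (hP : IsPolytope P) (hQ : IsPolytope Q) (c : Esp d) :
    polyFace (P + Q) c = polyFace P c + polyFace Q c := by
  obtain ⟨p₀, hp₀⟩ := face_nonempty hP c
  obtain ⟨q₀, hq₀⟩ := face_nonempty hQ c
  ext z
  constructor
  · rintro ⟨hzPQ, hzmin⟩
    obtain ⟨p, hp, q, hq, rfl⟩ := hzPQ
    have h1 : ⟪c, p⟫ + ⟪c, q⟫ ≤ ⟪c, p₀⟫ + ⟪c, q₀⟫ := by
      have := hzmin (p₀ + q₀) (Set.add_mem_add hp₀.1 hq₀.1)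
      rwa [inner_add_right, inner_add_right] at this
    have h2 := hp₀.2 p hp
    have h3 := hq₀.2 q hq
    have hp' : ⟪c, p⟫ = ⟪c, p₀⟫ := by linarith
    have hq' : ⟪c, q⟫ = ⟪c, q₀⟫ := by linarith
    exact Set.add_mem_add ⟨hp, fun y hy => hp' ▸ hp₀.2 y hy⟩
      ⟨hq, fun y hy => hq' ▸ hq₀.2 y hy⟩
  · rintro ⟨p, hp, q, hq, rfl⟩
    refine ⟨Set.add_mem_add hp.1 hq.1, fun y hy => ?_⟩
    obtain ⟨a, ha, b, hb, rfl⟩ := hy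
    rw [inner_add_right, inner_add_right]
    exact add_le_add (hp.2 a ha) (hq.2 b hb)

lemma face_const {P : Set (Esp d)} {c : Esp d}
    (h : ∀ x ∈ P, ∀ y ∈ P, ⟪c, x⟫ = ⟪c, y⟫) : polyFace P c = P :=
  Set.Subset.antisymm (fun x hx => hx.1)
    (fun x hx => ⟨hx, fun y hy => (h x hx y hy).le⟩)

lemma amin_perturb (s : Finset (Esp d)) (hs : s.Nonempty) (c c' : Esp d) :
    ∃ ε : ℝ, 0 < ε ∧ amin (c + ε • c') s = amin c' (amin c s) := by
  classical
  obtain ⟨x₀, hx₀⟩ := amin_nonempty (c := c) hs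
  obtain ⟨hx₀s, hx₀min⟩ := mem_amin.1 hx₀
  set m := ⟪c, x₀⟫ with hm
  obtain ⟨M, hM0, hM⟩ : ∃ M : ℝ, 0 ≤ M ∧ ∀ y ∈ s, |⟪c', y⟫| ≤ M := by
    obtain ⟨z, hz, hzmax⟩ := s.exists_max_image (fun y => |⟪c', y⟫|) hs
    exact ⟨|⟪c', z⟫|, abs_nonneg _, hzmax⟩
  set B := s \ amin c s with hB
  obtain ⟨δ, hδ0, hδ⟩ : ∃ δ : ℝ, 0 < δ ∧ ∀ y ∈ B, m + δ ≤ ⟪c, y⟫ := by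
    by_cases hBe : B.Nonempty
    · obtain ⟨z, hz, hzmin⟩ := B.exists_min_image (fun y => ⟪c, y⟫) hBe
      obtain ⟨hzs, hzn⟩ := Finset.mem_sdiff.1 hz
      have hzgt : m < ⟪c, z⟫ := by
        rcases lt_or_eq_of_le (hx₀min z hzs) with h | h
        · exact h
        · exact absurd (mem_amin.2 ⟨hzs, fun y hy => h ▸ hx₀min y hy⟩) hzn
      exact ⟨⟪c, z⟫ - m, by linarith, fun y hy => by
        have := hzmin y hy; linarith⟩
    · exact ⟨1, one_pos, fun y hy => absurd ⟨y, hy⟩ hBe⟩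
  refine ⟨δ / (2 * M + 2), by positivity, ?_⟩
  set ε := δ / (2 * M + 2) with hε
  have hε0 : 0 < ε := by positivity
  have hkey : 2 * ε * M < δ := by
    have h1 : 2 * ε * M = δ * (2 * M) / (2 * M + 2) := by rw [hε]; ring
    rw [h1]
    rw [div_lt_iff₀ (by positivity)]
    nlinarith
  have hval : ∀ z ∈ amin c s, ⟪c, z⟫ = m := fun z hz => amin_inner_eq hz hx₀
  have innerε : ∀ y : Esp d, ⟪c + ε • c', y⟫ = ⟪c, y⟫ + ε * ⟪c', y⟫ := fun y => by
    rw [inner_add_left, real_inner_smul_left]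
  obtain ⟨x₁, hx₁⟩ := amin_nonempty (c := c') (amin_nonempty (c := c) hs)
  obtain ⟨hx₁A, hx₁min⟩ := mem_amin.1 hx₁
  have hx₁s : x₁ ∈ s := amin_subset hx₁A
  have hcross : ∀ x ∈ amin c' (amin c s), ∀ y ∈ s, y ∉ amin c s →
      ⟪c + ε • c', x⟫ < ⟪c + ε • c', y⟫ := by
    intro x hx y hys hyn
    obtain ⟨hxA, hxmin⟩ := mem_amin.1 hx
    have hxs : x ∈ s := amin_subset hxA
    have hy : m + δ ≤ ⟪c, y⟫ := hδ y (Finset.mem_sdiff.2 ⟨hys, hyn⟩)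
    have hax := abs_le.1 (hM x hxs)
    have hay := abs_le.1 (hM y hys)
    rw [innerε, innerε, hval x hxA]
    nlinarith [hε0]
  have hinA : ∀ x ∈ amin c' (amin c s), ∀ y ∈ amin c s,
      ⟪c + ε • c', x⟫ ≤ ⟪c + ε • c', y⟫ := by
    intro x hx y hy
    obtain ⟨hxA, hxmin⟩ := mem_amin.1 hx
    rw [innerε, innerε, hval x hxA, hval y hy]
    have := hxmin y hy
    nlinarith [hε0]
  ext z
  constructor
  · intro hz
    obtain ⟨hzs, hzmin⟩ := mem_amin.1 hz
    have hzA : z ∈ amin c s := by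
      by_contra hzn
      exact absurd (hzmin x₁ hx₁s)
        (not_le.2 (lt_of_le_of_lt (hinA x₁ hx₁ x₁ hx₁A) (hcross x₁ hx₁ z hzs hzn))).elim
    refine mem_amin.2 ⟨hzA, fun y hy => ?_⟩
    have h1 := hzmin y (amin_subset hy)
    rw [innerε, innerε, hval z hzA, hval y hy] at h1
    have : ε * ⟪c', z⟫ ≤ ε * ⟪c', y⟫ := by linarith
    exact le_of_mul_le_mul_left this hε0
  · intro hz
    refine mem_amin.2 ⟨amin_subset (mem_amin.1 hz).1, fun y hy => ?_⟩
    by_cases hyA : y ∈ amin c s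
    · exact hinA z hz y hyA
    · exact (hcross z hz y hy hyA).le

end Stmt16Aux

namespace Stmt16Aux
variable {d : ℕ}

lemma face_perturb {P : Set (Esp d)} (hP : IsPolytope P) (c c' : Esp d) :
    ∃ ε : ℝ, 0 < ε ∧ polyFace P (c + ε • c') = polyFace (polyFace P c) c' := by
  obtain ⟨s, hs, rfl⟩ := hP
  obtain ⟨ε, hε, h⟩ := amin_perturb s hs c c'
  exact ⟨ε, hε, by
    rw [face_hull _ hs, h, face_hull c hs, face_hull c' (amin_nonempty hs)]⟩

lemma line_hull {e : Esp d} (he : e ≠ 0) {t : Finset (Esp d)} (ht : t.Nonempty)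
    (hline : ∀ x ∈ t, ∀ y ∈ t, ∃ r : ℝ, x - y = r • e) :
    ∃ q₁ ∈ t, ∃ q₂ ∈ t, convexHull ℝ (t : Set (Esp d)) = segment ℝ q₁ q₂ ∧
      ∃ τ : ℝ, 0 ≤ τ ∧ q₂ - q₁ = τ • e := by
  have hee : (0:ℝ) < ⟪e, e⟫ := lt_of_le_of_ne real_inner_self_nonneg (Ne.symm (inner_self_ne_zero.2 he))
  obtain ⟨q₁, hq₁, hmin⟩ := t.exists_min_image (fun y => ⟪e, y⟫) ht
  obtain ⟨q₂, hq₂, hmax⟩ := t.exists_max_image (fun y => ⟪e, y⟫) ht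
  obtain ⟨τ, hτ⟩ := hline q₂ hq₂ q₁ hq₁
  have hτval : ⟪e, q₂⟫ - ⟪e, q₁⟫ = τ * ⟪e, e⟫ := by
    rw [← inner_sub_right, hτ, real_inner_smul_right]
  have hτ0 : 0 ≤ τ := by
    have := hmin q₂ hq₂
    nlinarith
  refine ⟨q₁, hq₁, q₂, hq₂, ?_, τ, hτ0, hτ⟩
  apply Set.Subset.antisymm
  · apply convexHull_min ?_ (convex_segment q₁ q₂)
    intro x hx
    obtain ⟨r, hr⟩ := hline x hx q₁ hq₁
    have hrval : ⟪e, x⟫ - ⟪e, q₁⟫ = r * ⟪e, e⟫ := by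
      rw [← inner_sub_right, hr, real_inner_smul_right]
    have hr0 : 0 ≤ r := by have := hmin x hx; nlinarith
    have hrτ : r ≤ τ := by have := hmax x hx; nlinarith
    by_cases hτz : τ = 0
    · have : r = 0 := le_antisymm (hτz ▸ hrτ) hr0
      have hx1 : x = q₁ := by
        have := hr; rw [this] at *; rw [‹r = 0›] at hr
        simpa [sub_eq_zero] using hr
      exact hx1 ▸ left_mem_segment ℝ q₁ q₂
    · refine ⟨1 - r / τ, r / τ, by
        have : r / τ ≤ 1 := (div_le_one (lt_of_le_of_ne hτ0 (Ne.symm hτz))).2 hrτ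
        linarith, by positivity, by ring, ?_⟩
      have hq2 : q₂ = q₁ + τ • e := by rw [← hτ]; abel
      have hx2 : x = q₁ + r • e := by rw [← hr]; abel
      rw [hq2, hx2, smul_add, smul_smul]
      rw [div_mul_cancel₀ _ hτz]
      module
  · rw [← convexHull_pair]
    apply convexHull_mono
    intro x hx
    rcases hx with rfl | hx
    · exact hq₁
    · simpa using hx ▸ hq₂
end Stmt16Aux

namespace Stmt16Aux
variable {d : ℕ}

lemma left_extreme_segment (x y : Esp d) :
    x ∈ Set.extremePoints ℝ (segment ℝ x y) := by
  by_cases hxy : y = x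
  · subst hxy
    rw [segment_same]
    rw [extremePoints_singleton]; exact Set.mem_singleton _
  refine mem_extremePoints.2 ⟨left_mem_segment ℝ x y, ?_⟩
  intro a ha b hb hx
  have hK : (0:ℝ) < ⟪y - x, y - x⟫ :=
    lt_of_le_of_ne real_inner_self_nonneg
      (Ne.symm (inner_self_ne_zero.2 (sub_ne_zero.2 hxy)))
  set f : Esp d → ℝ := fun z => ⟪y - x, z⟫ with hf
  have hfy : f y - f x = ⟪y - x, y - x⟫ := by simp only [hf, inner_sub_right]
  have hseg : ∀ z ∈ segment ℝ x y, f x ≤ f z := by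
    rintro z ⟨p, q, hp, hq, hpq, rfl⟩
    have hexp : f (p • x + q • y) = p * f x + q * f y := by
      simp only [hf, inner_add_right, real_inner_smul_right]
    rw [hexp]
    have hp' : p = 1 - q := by linarith
    rw [hp']
    nlinarith [mul_nonneg hq (by linarith : (0:ℝ) ≤ f y - f x)]
  have hfeq : ∀ z ∈ segment ℝ x y, f z = f x → z = x := by
    rintro z ⟨p, q, hp, hq, hpq, rfl⟩ hfz
    have hexp : f (p • x + q • y) = p * f x + q * f y := by
      simp only [hf, inner_add_right, real_inner_smul_right]
    rw [hexp] at hfz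
    have hp' : p = 1 - q := by linarith
    rw [hp'] at hfz
    have hq0 : q = 0 := by
      by_contra hqne
      have hqpos : 0 < q := lt_of_le_of_ne hq (Ne.symm hqne)
      nlinarith [mul_pos hqpos hK]
    have hp1 : p = 1 := by linarith
    rw [hq0, hp1, one_smul, zero_smul, add_zero]
  obtain ⟨s, t, hs, ht, hst, hx'⟩ := hx
  have hfa := hseg a ha
  have hfb := hseg b hb
  have hfx : f x = s * f a + t * f b := by
    rw [← hx']; simp only [hf, inner_add_right, real_inner_smul_right]
  have h0 : (s + t) * f x = f x := by rw [hst, one_mul]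
  have hea : f a = f x := by
    by_contra hne
    have hlt : f x < f a := lt_of_le_of_ne hfa (fun h => hne h.symm)
    nlinarith [mul_pos hs (sub_pos.2 hlt), mul_nonneg ht.le (sub_nonneg.2 hfb), h0]
  have heb : f b = f x := by
    by_contra hne
    have hlt : f x < f b := lt_of_le_of_ne hfb (fun h => hne h.symm)
    nlinarith [mul_pos ht (sub_pos.2 hlt), mul_nonneg hs.le (sub_nonneg.2 hfa), h0]
  exact ⟨hfeq a ha hea, hfeq b hb heb⟩

lemma right_extreme_segment (x y : Esp d) :
    y ∈ Set.extremePoints ℝ (segment ℝ x y) := by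
  rw [segment_symm]; exact left_extreme_segment y x

lemma seg_add_seg (a c e : Esp d) {α β : ℝ} (hα : 0 ≤ α) (hβ : 0 ≤ β) :
    segment ℝ a (a + α • e) + segment ℝ c (c + β • e)
      = segment ℝ (a + c) (a + c + (α + β) • e) := by
  ext z
  simp only [Set.mem_add, segment_eq_image', add_sub_cancel_left, Set.mem_image]
  constructor
  · rintro ⟨p, ⟨θ₁, hθ₁, rfl⟩, q, ⟨θ₂, hθ₂, rfl⟩, rfl⟩
    by_cases hs : α + β = 0
    · have hα0 : α = 0 := by linarith
      have hβ0 : β = 0 := by linarith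
      exact ⟨0, ⟨le_refl 0, zero_le_one⟩, by rw [hα0, hβ0]; module⟩
    · have hspos : 0 < α + β := lt_of_le_of_ne (by linarith) (Ne.symm hs)
      refine ⟨(θ₁ * α + θ₂ * β) / (α + β), ⟨div_nonneg (add_nonneg (mul_nonneg hθ₁.1 hα) (mul_nonneg hθ₂.1 hβ)) hspos.le, ?_⟩, ?_⟩
      · rw [div_le_one hspos]
        nlinarith [hθ₁.1, hθ₁.2, hθ₂.1, hθ₂.2]
      · rw [smul_smul, div_mul_cancel₀ _ hs]
        module
  · rintro ⟨θ, hθ, rfl⟩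
    exact ⟨a + θ • α • e, ⟨θ, hθ, rfl⟩, c + θ • β • e, ⟨θ, hθ, rfl⟩, by module⟩
end Stmt16Aux

namespace Stmt16Aux
variable {d : ℕ}

lemma generic_dir {e : Esp d} (he : e ≠ 0) :
    ∀ n : ℕ, ∀ t : Finset (Esp d), t.card ≤ n → t.Nonempty →
    ∃ c₂ : Esp d, ⟪c₂, e⟫ = 0 ∧ ∃ q₁ q₂ : Esp d,
      q₁ ∈ Set.extremePoints ℝ (convexHull ℝ (t : Set (Esp d))) ∧
      q₂ ∈ Set.extremePoints ℝ (convexHull ℝ (t : Set (Esp d))) ∧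
      polyFace (convexHull ℝ (t : Set (Esp d))) c₂ = segment ℝ q₁ q₂ ∧
      ∃ τ : ℝ, 0 ≤ τ ∧ q₂ - q₁ = τ • e := by
  intro n
  induction n with
  | zero =>
    intro t htc ht
    exact absurd (Finset.card_eq_zero.1 (Nat.le_zero.1 htc)) (Finset.nonempty_iff_ne_empty.1 ht)
  | succ n ih =>
    intro t htc ht
    by_cases hall : ∀ x ∈ t, ∀ y ∈ t, ∃ r : ℝ, x - y = r • e
    · obtain ⟨q₁, hq₁, q₂, hq₂, hconv, τ, hτ, hdiff⟩ := line_hull he ht hall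
      have hface : polyFace (convexHull ℝ (t : Set (Esp d))) 0
          = convexHull ℝ (t : Set (Esp d)) :=
        face_const (fun x _ y _ => by rw [inner_zero_left, inner_zero_left])
      refine ⟨0, inner_zero_left e, q₁, q₂, ?_, ?_, ?_, τ, hτ, hdiff⟩
      · rw [hconv]; exact left_extreme_segment q₁ q₂
      · rw [hconv]; exact right_extreme_segment q₁ q₂
      · rw [hface, hconv]
    · push_neg at hall
      obtain ⟨x, hx, y, hy, hxy⟩ := hall
      have hee : (0:ℝ) < ⟪e, e⟫ :=
        lt_of_le_of_ne real_inner_self_nonneg (Ne.symm (inner_self_ne_zero.2 he))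
      set w := x - y with hw
      set c₃ := w - (⟪e, w⟫ / ⟪e, e⟫) • e with hc₃
      have hc₃e : ⟪c₃, e⟫ = 0 := by
        rw [hc₃, inner_sub_left, real_inner_smul_left, div_mul_cancel₀ _ hee.ne',
          real_inner_comm w e, sub_self]
      have hc₃ne : c₃ ≠ 0 := by
        intro h
        exact hxy (⟪e, w⟫ / ⟪e, e⟫) (sub_eq_zero.1 h)
      have hc₃w : ⟪c₃, w⟫ ≠ 0 := by
        have hwc : w = c₃ + (⟪e, w⟫ / ⟪e, e⟫) • e := by rw [hc₃]; abel
        have : ⟪c₃, w⟫ = ⟪c₃, c₃⟫ := by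
          rw [hwc, inner_add_right, real_inner_smul_right, hc₃e, mul_zero, add_zero]
        rw [this]
        exact inner_self_ne_zero.2 hc₃ne
      have hnotboth : (x ∈ t ∧ x ∉ amin c₃ t) ∨ (y ∈ t ∧ y ∉ amin c₃ t) := by
        by_contra h
        push_neg at h
        exact hc₃w (by rw [hw, inner_sub_right, amin_inner_eq (h.1 hx) (h.2 hy), sub_self])  -- may need adjust
      have hssub : amin c₃ t ⊂ t := by
        rw [Finset.ssubset_iff_of_subset amin_subset]
        rcases hnotboth with ⟨h1, h2⟩ | ⟨h1, h2⟩
        · exact ⟨x, h1, h2⟩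
        · exact ⟨y, h1, h2⟩
      have hcard : (amin c₃ t).card ≤ n := by
        have := Finset.card_lt_card hssub
        omega
      obtain ⟨c₂', hc₂'e, q₁, q₂, hq₁, hq₂, hface, τ, hτ, hdq⟩ :=
        ih (amin c₃ t) hcard (amin_nonempty ht)
      obtain ⟨ε, hε, hpert⟩ := amin_perturb t ht c₃ c₂'
      have hfc₃ : polyFace (convexHull ℝ (t : Set (Esp d))) c₃
          = convexHull ℝ ((amin c₃ t : Finset (Esp d)) : Set (Esp d)) := face_hull c₃ ht
      have hxtr : IsExtreme ℝ (convexHull ℝ (t : Set (Esp d)))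
          (convexHull ℝ ((amin c₃ t : Finset (Esp d)) : Set (Esp d))) :=
        hfc₃ ▸ face_isExtreme _ c₃
      refine ⟨c₃ + ε • c₂',
        by rw [inner_add_left, real_inner_smul_left, hc₃e, hc₂'e]; ring, q₁, q₂,
        hxtr.extremePoints_subset_extremePoints hq₁,
        hxtr.extremePoints_subset_extremePoints hq₂, ?_, τ, hτ, hdq⟩
      rw [face_hull _ ht, hpert, ← face_hull c₂' (amin_nonempty ht)]
      exact hface
end Stmt16Aux

open Stmt16Aux in
theorem stmt16 {d : ℕ} (P Q : Set (Esp d)) (hP : IsPolytope P) (hQ : IsPolytope Q)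
    (u v : Esp d) (hu : u ∈ polyVerts P) (hv : v ∈ polyVerts P) (huv : u ≠ v) :
    polyAdj P u v ↔
      ∃ w₁ ∈ gammaVerts P Q u, ∃ w₂ ∈ gammaVerts P Q v, polyAdj (P + Q) w₁ w₂ := by
  classical
  obtain ⟨s, hsne, rfl⟩ := hP
  obtain ⟨t, htne, rfl⟩ := hQ
  have hPpoly : IsPolytope (convexHull ℝ (s : Set (Esp d))) := ⟨s, hsne, rfl⟩
  have hQpoly : IsPolytope (convexHull ℝ (t : Set (Esp d))) := ⟨t, htne, rfl⟩
  have hPQ : IsPolytope (convexHull ℝ (s : Set (Esp d)) + convexHull ℝ (t : Set (Esp d))) := by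
    refine ⟨s + t, ?_, by rw [Finset.coe_add, convexHull_add]⟩
    obtain ⟨a, ha⟩ := hsne; obtain ⟨b, hb⟩ := htne
    exact ⟨a + b, Finset.add_mem_add ha hb⟩
  have he : v - u ≠ 0 := sub_ne_zero.2 (Ne.symm huv)
  constructor
  · rintro ⟨-, -, -, c, hc⟩
    set A := amin c t with hA
    have hAne : A.Nonempty := amin_nonempty htne
    obtain ⟨c₂, hc₂e, q₁, q₂, hq₁, hq₂, hface₂, τ, hτ, hdq⟩ :=
      generic_dir he A.card A le_rfl hAne
    have hfQ : polyFace (convexHull ℝ (t : Set (Esp d))) c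
        = convexHull ℝ ((A : Finset (Esp d)) : Set (Esp d)) := face_hull c htne
    have hQxtr : IsExtreme ℝ (convexHull ℝ (t : Set (Esp d)))
        (convexHull ℝ ((A : Finset (Esp d)) : Set (Esp d))) := hfQ ▸ face_isExtreme _ c
    have hq₁Q : q₁ ∈ polyVerts (convexHull ℝ (t : Set (Esp d))) :=
      hQxtr.extremePoints_subset_extremePoints hq₁
    have hq₂Q : q₂ ∈ polyVerts (convexHull ℝ (t : Set (Esp d))) :=
      hQxtr.extremePoints_subset_extremePoints hq₂
    obtain ⟨ε, hε, hpert⟩ := face_perturb hPQ c c₂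
    have hsum : polyFace (convexHull ℝ (s : Set (Esp d)) + convexHull ℝ (t : Set (Esp d))) c
        = segment ℝ u v + convexHull ℝ ((A : Finset (Esp d)) : Set (Esp d)) := by
      rw [face_add hPpoly hQpoly c, hc, hfQ]
    have hseg_poly : IsPolytope (segment ℝ u v) :=
      ⟨{u, v}, ⟨u, by simp⟩, by rw [Finset.coe_insert, Finset.coe_singleton, convexHull_pair]⟩
    have hA_poly : IsPolytope (convexHull ℝ ((A : Finset (Esp d)) : Set (Esp d))) :=
      ⟨A, hAne, rfl⟩
    have hfaceseg : polyFace (segment ℝ u v) c₂ = segment ℝ u v := by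
      apply face_const
      have hcu : ∀ z ∈ segment ℝ u v, ⟪c₂, z⟫ = ⟪c₂, u⟫ := by
        rintro z ⟨p, q, hp, hq, hpq, rfl⟩
        have huv2 : ⟪c₂, v⟫ = ⟪c₂, u⟫ := by
          have h0 : ⟪c₂, v⟫ - ⟪c₂, u⟫ = 0 := by rw [← inner_sub_right]; exact hc₂e
          linarith
        rw [inner_add_right, real_inner_smul_right, real_inner_smul_right, huv2,
          ← add_mul, hpq, one_mul]
      intro a ha b hb
      rw [hcu a ha, hcu b hb]
    have hfinal : polyFace (convexHull ℝ (s : Set (Esp d)) + convexHull ℝ (t : Set (Esp d)))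
        (c + ε • c₂) = segment ℝ (u + q₁) (v + q₂) := by
      rw [hpert, hsum, face_add hseg_poly hA_poly, hfaceseg, hface₂]
      have h1 : v = u + (1:ℝ) • (v - u) := by module
      have h2 : q₂ = q₁ + τ • (v - u) := by rw [← hdq]; abel
      rw [h1, h2, seg_add_seg u q₁ (v - u) zero_le_one hτ]
      have h3 : u + q₁ + ((1:ℝ) + τ) • (v - u) = (u + (1:ℝ) • (v - u)) + (q₁ + τ • (v - u)) := by
        module
      rw [h3]
    have hd : v + q₂ - (u + q₁) = (1 + τ) • (v - u) := by
      calc v + q₂ - (u + q₁) = (v - u) + (q₂ - q₁) := by abel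
      _ = (v - u) + τ • (v - u) := by rw [hdq]
      _ = (1 + τ) • (v - u) := by module
    have hne12 : u + q₁ ≠ v + q₂ := by
      intro h
      rw [← h, sub_self] at hd
      exact he ((smul_eq_zero.1 hd.symm).resolve_left (by positivity))
    have hxtrPQ : IsExtreme ℝ
        (convexHull ℝ (s : Set (Esp d)) + convexHull ℝ (t : Set (Esp d)))
        (segment ℝ (u + q₁) (v + q₂)) := hfinal ▸ face_isExtreme _ _
    have hw₁ : u + q₁ ∈ polyVerts
        (convexHull ℝ (s : Set (Esp d)) + convexHull ℝ (t : Set (Esp d))) :=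
      hxtrPQ.extremePoints_subset_extremePoints (left_extreme_segment _ _)
    have hw₂ : v + q₂ ∈ polyVerts
        (convexHull ℝ (s : Set (Esp d)) + convexHull ℝ (t : Set (Esp d))) :=
      hxtrPQ.extremePoints_subset_extremePoints (right_extreme_segment _ _)
    exact ⟨u + q₁, ⟨hw₁, q₁, hq₁Q, rfl⟩, v + q₂, ⟨hw₂, q₂, hq₂Q, rfl⟩,
      hne12, hw₁, hw₂, c + ε • c₂, hfinal⟩
  · rintro ⟨w₁, ⟨hw₁v, q₁, hq₁v, rfl⟩, w₂, ⟨hw₂v, q₂, hq₂v, rfl⟩, hadj⟩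
    obtain ⟨hne, -, -, c, hc⟩ := hadj
    obtain ⟨p₀, hp₀⟩ := face_nonempty hPpoly c
    obtain ⟨r₀, hr₀⟩ := face_nonempty hQpoly c
    have hw₁m : u + q₁ ∈ polyFace (convexHull ℝ (s : Set (Esp d))
        + convexHull ℝ (t : Set (Esp d))) c := hc ▸ left_mem_segment ℝ _ _
    have hw₂m : v + q₂ ∈ polyFace (convexHull ℝ (s : Set (Esp d))
        + convexHull ℝ (t : Set (Esp d))) c := hc ▸ right_mem_segment ℝ _ _
    have huP : u ∈ convexHull ℝ (s : Set (Esp d)) := hu.1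
    have hvP : v ∈ convexHull ℝ (s : Set (Esp d)) := hv.1
    have hq₁Q : q₁ ∈ convexHull ℝ (t : Set (Esp d)) := hq₁v.1
    have hq₂Q : q₂ ∈ convexHull ℝ (t : Set (Esp d)) := hq₂v.1
    have h1 : ⟪c, u⟫ + ⟪c, q₁⟫ ≤ ⟪c, p₀⟫ + ⟪c, r₀⟫ := by
      have h := hw₁m.2 (p₀ + r₀) (Set.add_mem_add hp₀.1 hr₀.1)
      rwa [inner_add_right, inner_add_right] at h
    have h2 : ⟪c, v⟫ + ⟪c, q₂⟫ ≤ ⟪c, p₀⟫ + ⟪c, r₀⟫ := by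
      have h := hw₂m.2 (p₀ + r₀) (Set.add_mem_add hp₀.1 hr₀.1)
      rwa [inner_add_right, inner_add_right] at h
    have hup := hp₀.2 u huP
    have hvp := hp₀.2 v hvP
    have hq1r := hr₀.2 q₁ hq₁Q
    have hq2r := hr₀.2 q₂ hq₂Q
    have hueq : ⟪c, u⟫ = ⟪c, p₀⟫ := by linarith
    have hveq : ⟪c, v⟫ = ⟪c, p₀⟫ := by linarith
    have hq1eq : ⟪c, q₁⟫ = ⟪c, r₀⟫ := by linarith
    have huF : u ∈ polyFace (convexHull ℝ (s : Set (Esp d))) c :=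
      ⟨huP, fun y hy => by rw [hueq]; exact hp₀.2 y hy⟩
    have hvF : v ∈ polyFace (convexHull ℝ (s : Set (Esp d))) c :=
      ⟨hvP, fun y hy => by rw [hveq]; exact hp₀.2 y hy⟩
    have hq₁F : q₁ ∈ polyFace (convexHull ℝ (t : Set (Esp d))) c :=
      ⟨hq₁Q, fun y hy => by rw [hq1eq]; exact hr₀.2 y hy⟩
    have hfaceP : polyFace (convexHull ℝ (s : Set (Esp d))) c
        = convexHull ℝ ((amin c s : Finset (Esp d)) : Set (Esp d)) := face_hull c hsne
    have hDne : v + q₂ - (u + q₁) ≠ 0 := sub_ne_zero.2 (Ne.symm hne)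
    have hsub : ∀ p ∈ polyFace (convexHull ℝ (s : Set (Esp d))) c,
        ∃ r : ℝ, p - u = r • (v + q₂ - (u + q₁)) := by
      intro p hp
      have hmem : p + q₁ ∈ segment ℝ (u + q₁) (v + q₂) := by
        rw [← hc, face_add hPpoly hQpoly c]
        exact Set.add_mem_add hp hq₁F
      rw [segment_eq_image'] at hmem
      obtain ⟨θ, hθ, hθeq⟩ := hmem
      refine ⟨θ, ?_⟩
      have hre : p - u = (p + q₁) - (u + q₁) := by abel
      rw [hre, ← hθeq]
      module
    have hline : ∀ x ∈ amin c s, ∀ y ∈ amin c s,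
        ∃ r : ℝ, x - y = r • (v + q₂ - (u + q₁)) := by
      intro x hx y hy
      obtain ⟨rx, hrx⟩ := hsub x (by rw [hfaceP]; exact subset_convexHull ℝ _ hx)
      obtain ⟨ry, hry⟩ := hsub y (by rw [hfaceP]; exact subset_convexHull ℝ _ hy)
      refine ⟨rx - ry, ?_⟩
      have : x - y = (x - u) - (y - u) := by abel
      rw [this, hrx, hry, sub_smul]
    obtain ⟨a, ha, b, hb, hconv, -⟩ := line_hull hDne (amin_nonempty hsne) hline
    have hfseg : polyFace (convexHull ℝ (s : Set (Esp d))) c = segment ℝ a b := by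
      rw [hfaceP, hconv]
    have haP : a ∈ convexHull ℝ (s : Set (Esp d)) :=
      subset_convexHull ℝ _ (amin_subset ha)
    have hbP : b ∈ convexHull ℝ (s : Set (Esp d)) :=
      subset_convexHull ℝ _ (amin_subset hb)
    have huseg : u ∈ segment ℝ a b := hfseg ▸ huF
    have hvseg : v ∈ segment ℝ a b := hfseg ▸ hvF
    have hu' := (mem_extremePoints_iff_forall_segment.1 hu).2 a haP b hbP huseg
    have hv' := (mem_extremePoints_iff_forall_segment.1 hv).2 a haP b hbP hvseg
    refine ⟨huv, hu, hv, c, ?_⟩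
    rcases hu' with h1 | h1 <;> rcases hv' with h2 | h2
    · exact absurd (h1.symm.trans h2) huv
    · rw [hfseg, ← h1, ← h2]
    · rw [hfseg, ← h1, ← h2, segment_symm]
    · exact absurd (h1.symm.trans h2) huv
end
end
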